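/- Under Assumptions (A) and (B), for every compact set K ⊂ [0,T) × ℝ^d and every r > 0 there exist constants C > 0, c > 0 and λ₀ > 0 such that for every λ ∈ (0, λ₀], sup_{(t,x) ∈ K} ∫_{{y : ‖y − x*‖ ≥ r}} η_{λ,t,x}(y) dy ≤ C e^{−c/λ}. -/

import Mathlib

open MeasureTheory Real Filter Topology
open scoped RealInnerProductSpace

noncomputable section

/-- The heat kernel with diffusivity `β`: `G_r(z) = (4πβr)^(−d/2) exp(−‖z‖²/(4βr))`. -/
def heatK {d : ℕ} (β r : ℝ) (z : EuclideanSpace ℝ (Fin d)) : ℝ :=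
  (4 * π * β * r) ^ (-(d : ℝ) / 2) * Real.exp (-‖z‖ ^ 2 / (4 * β * r))

/-- The Laplacian of a scalar function on `ℝ^d`. -/
def lap {d : ℕ} (g : EuclideanSpace ℝ (Fin d) → ℝ) (x : EuclideanSpace ℝ (Fin d)) : ℝ :=
  ∑ i : Fin d,
    fderiv ℝ (fun z => fderiv ℝ g z (EuclideanSpace.single i 1)) x (EuclideanSpace.single i 1)

/-- The normalized Gibbs density `π_λ(y) = e^{−α_λ f(y)} / M_λ`, with `α_λ = T/(2λβ)`. -/
def gibbsDen {d : ℕ} (T β lam : ℝ) (f : EuclideanSpace ℝ (Fin d) → ℝ)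
    (y : EuclideanSpace ℝ (Fin d)) : ℝ :=
  Real.exp (-(T / (2 * lam * β)) * f y) / ∫ z, Real.exp (-(T / (2 * lam * β)) * f z)

/-- `h_λ(t,x) = ∫ G_{T−t}(x−y) π_λ(y) dy`. -/
def hHC {d : ℕ} (T β lam : ℝ) (f : EuclideanSpace ℝ (Fin d) → ℝ) (t : ℝ)
    (x : EuclideanSpace ℝ (Fin d)) : ℝ :=
  ∫ y, heatK β (T - t) (x - y) * gibbsDen T β lam f y

/-- The conditional terminal density `η_{λ,t,x}(y) = G_{T−t}(x−y) π_λ(y) / h_λ(t,x)`. -/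
def etaHC {d : ℕ} (T β lam : ℝ) (f : EuclideanSpace ℝ (Fin d) → ℝ) (t : ℝ)
    (x y : EuclideanSpace ℝ (Fin d)) : ℝ :=
  heatK β (T - t) (x - y) * gibbsDen T β lam f y / hHC T β lam f t x

/-- The barycenter `a_λ(t,x) = ∫ y η_{λ,t,x}(y) dy`. -/
def aHC {d : ℕ} (T β lam : ℝ) (f : EuclideanSpace ℝ (Fin d) → ℝ) (t : ℝ)
    (x : EuclideanSpace ℝ (Fin d)) : EuclideanSpace ℝ (Fin d) :=
  ∫ y, etaHC T β lam f t x y • y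

/-- The optimal drift `u*_λ(t,x) = 2β ∇_x log h_λ(t,x)`. -/
def uHC {d : ℕ} (T β lam : ℝ) (f : EuclideanSpace ℝ (Fin d) → ℝ) (t : ℝ)
    (x : EuclideanSpace ℝ (Fin d)) : EuclideanSpace ℝ (Fin d) :=
  (2 * β) • gradient (fun z => Real.log (hHC T β lam f t z)) x

/-- The potential `Φ_λ(t,x) = −2β log h_λ(t,x)`. -/
def PhiHC {d : ℕ} (T β lam : ℝ) (f : EuclideanSpace ℝ (Fin d) → ℝ) (t : ℝ)
    (x : EuclideanSpace ℝ (Fin d)) : ℝ :=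
  -(2 * β) * Real.log (hHC T β lam f t x)

/-- The value function `V_λ(t,x) = −(2λβ/T) log h_λ(t,x) − (2λβ/T) log M_λ`. -/
def VHC {d : ℕ} (T β lam : ℝ) (f : EuclideanSpace ℝ (Fin d) → ℝ) (t : ℝ)
    (x : EuclideanSpace ℝ (Fin d)) : ℝ :=
  -(2 * lam * β / T) * Real.log (hHC T β lam f t x)
    - (2 * lam * β / T) * Real.log (∫ z, Real.exp (-(T / (2 * lam * β)) * f z))

set_option maxHeartbeats 1000000 in
theorem conditional_mass_concentration (d : ℕ) (hd : 1 ≤ d) (T β : ℝ)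
    (hT : 0 < T) (hβ : 0 < β)
    (f : EuclideanSpace ℝ (Fin d) → ℝ)
    (hf : ContDiff ℝ 2 f)
    (hbdd : BddBelow (Set.range f))
    (hcoer : Tendsto f (cocompact (EuclideanSpace ℝ (Fin d))) atTop)
    (hint : ∀ c > 0,
      Integrable (fun y => Real.exp (-c * f y)) ∧
      Integrable (fun y => ‖gradient f y‖ * Real.exp (-c * f y)) ∧
      Integrable (fun y => ‖iteratedFDeriv ℝ 2 f y‖ * Real.exp (-c * f y)))
    (xstar : EuclideanSpace ℝ (Fin d))
    (hmin : ∀ y, f xstar ≤ f y)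
    (huniq : ∀ y, f y = f xstar → y = xstar) :
    ∀ K : Set (ℝ × EuclideanSpace ℝ (Fin d)), IsCompact K →
      K ⊆ Set.Ico 0 T ×ˢ Set.univ →
      ∀ r > 0, ∃ C > 0, ∃ c > 0, ∃ lam₀ > 0, ∀ lam ∈ Set.Ioc (0:ℝ) lam₀,
        ∀ p ∈ K,
          (∫ y in {y : EuclideanSpace ℝ (Fin d) | r ≤ ‖y - xstar‖},
              etaHC T β lam f p.1 p.2 y)
            ≤ C * Real.exp (-c / lam) := by
  intro K hK hKsub r hr
  rcases K.eq_empty_or_nonempty with hKe | hKne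
  · exact ⟨1, one_pos, 1, one_pos, 1, one_pos, fun lam _ p hp => by simp [hKe] at hp⟩
  have hπ := Real.pi_pos
  set fstar := f xstar with hfstar
  -- positivity of the Gibbs normalization
  have hexp_pos : ∀ c : ℝ, 0 < c → 0 < ∫ z, Real.exp (-c * f z) := by
    intro c hc
    rw [integral_pos_iff_support_of_nonneg_ae (ae_of_all _ fun y => (Real.exp_pos _).le)
      (hint c hc).1]
    have hsupp : (Function.support fun y : EuclideanSpace ℝ (Fin d) =>
        Real.exp (-c * f y)) = Set.univ := by
      ext y; simp [Function.support, Real.exp_ne_zero]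
    rw [hsupp]
    exact (Metric.measure_ball_pos volume xstar one_pos).trans_le (measure_mono (Set.subset_univ _))
  -- the time gap ε
  obtain ⟨p₀, hp₀K, hp₀min⟩ := hK.exists_isMinOn hKne
    ((continuous_const.sub continuous_fst).continuousOn)
  set ε := T - p₀.1 with hεdef
  have hε : 0 < ε := sub_pos.2 (hKsub hp₀K).1.2
  have hεle : ∀ p ∈ K, ε ≤ T - p.1 := fun p hp => hp₀min hp
  have hTt : ∀ p ∈ K, 0 < T - p.1 := fun p hp => lt_of_lt_of_le hε (hεle p hp)
  have htle : ∀ p ∈ K, T - p.1 ≤ T := fun p hp => by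
    have := (hKsub hp).1.1; linarith
  -- bound on positions
  obtain ⟨R₂, hR₂⟩ := hK.exists_bound_of_continuousOn continuous_snd.continuousOn
  -- the gap δ on {r ≤ ‖y - x*‖}
  obtain ⟨s₁, hs₁c, hs₁⟩ : ∃ s, IsCompact s ∧ ∀ y ∉ s, fstar + 1 ≤ f y := by
    have h := (hasBasis_cocompact.eventually_iff).1
      (hcoer.eventually (eventually_ge_atTop (fstar + 1)))
    rcases h with ⟨s, hs, h⟩
    exact ⟨s, hs, fun y hy => h hy⟩
  have hSclosed : IsClosed {y : EuclideanSpace ℝ (Fin d) | r ≤ ‖y - xstar‖} :=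
    isClosed_le continuous_const ((continuous_id.sub continuous_const).norm)
  have hSmeas : MeasurableSet {y : EuclideanSpace ℝ (Fin d) | r ≤ ‖y - xstar‖} :=
    hSclosed.measurableSet
  obtain ⟨δ, hδpos, hδ1, hδS⟩ : ∃ δ : ℝ, 0 < δ ∧ δ ≤ 1 ∧
      ∀ y, r ≤ ‖y - xstar‖ → fstar + δ ≤ f y := by
    rcases (s₁ ∩ {y | r ≤ ‖y - xstar‖}).eq_empty_or_nonempty with he | hne
    · refine ⟨1, one_pos, le_refl _, fun y hy => ?_⟩
      have hy' : y ∉ s₁ := fun hys => Set.eq_empty_iff_forall_notMem.1 he y ⟨hys, hy⟩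
      exact hs₁ y hy'
    · obtain ⟨y₀, hy₀mem, hy₀min⟩ := (hs₁c.inter_right hSclosed).exists_isMinOn hne
        hf.continuous.continuousOn
      have hy₀ne : y₀ ≠ xstar := by
        intro h
        have : r ≤ ‖y₀ - xstar‖ := hy₀mem.2
        rw [h, sub_self, norm_zero] at this; linarith
      have hy₀gt : fstar < f y₀ :=
        lt_of_le_of_ne (hmin y₀) (fun h => hy₀ne (huniq y₀ h.symm))
      refine ⟨min 1 (f y₀ - fstar), lt_min one_pos (by linarith), min_le_left _ _,
        fun y hy => ?_⟩
      by_cases hys : y ∈ s₁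
      · have := hy₀min (Set.mem_inter hys hy)
        have h2 : min 1 (f y₀ - fstar) ≤ f y₀ - fstar := min_le_right _ _
        simp only [Set.mem_setOf_eq] at this
        linarith
      · have := hs₁ y hys
        have h2 : min 1 (f y₀ - fstar) ≤ 1 := min_le_left _ _
        linarith
  -- the radius ρ
  obtain ⟨ρ₁, hρ₁pos, hρ₁⟩ := Metric.continuousAt_iff.1 hf.continuous.continuousAt
    (δ / 2) (half_pos hδpos)
  set ρ := min (ρ₁ / 2) 1 with hρdef
  have hρpos : 0 < ρ := lt_min (half_pos hρ₁pos) one_pos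
  have hρ1 : ρ ≤ 1 := min_le_right _ _
  have hρf : ∀ z ∈ Metric.closedBall xstar ρ, f z ≤ fstar + δ / 2 := by
    intro z hz
    have hdist : dist z xstar < ρ₁ := by
      have := Metric.mem_closedBall.1 hz
      have h2 : ρ ≤ ρ₁ / 2 := min_le_left _ _
      linarith
    have := hρ₁ hdist
    rw [Real.dist_eq] at this
    have := abs_lt.1 this
    linarith [this.1, this.2]
  -- R bounds ‖x - z‖ for x from K, z in the ball
  set R := R₂ + ‖xstar‖ + 1 with hRdef
  have hRz : ∀ p ∈ K, ∀ z ∈ Metric.closedBall xstar ρ, ‖p.2 - z‖ ≤ R := by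
    intro p hp z hz
    have h1 : ‖p.2‖ ≤ R₂ := hR₂ p hp
    have h2 : ‖z - xstar‖ ≤ ρ := by
      have := Metric.mem_closedBall.1 hz
      rwa [dist_eq_norm] at this
    calc ‖p.2 - z‖ ≤ ‖p.2‖ + ‖z‖ := norm_sub_le _ _
      _ ≤ R₂ + (‖z - xstar‖ + ‖xstar‖) := by
          have h3 : ‖z‖ ≤ ‖z - xstar‖ + ‖xstar‖ := by
            calc ‖z‖ = ‖z - xstar + xstar‖ := by rw [sub_add_cancel]
              _ ≤ _ := norm_add_le _ _
          linarith
      _ ≤ R := by rw [hRdef]; linarith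
  -- heat kernel bounds
  have hdexp : -(d : ℝ) / 2 ≤ 0 := by
    have : (0:ℝ) ≤ (d:ℝ) := Nat.cast_nonneg d
    linarith
  set supG := (4 * π * β * ε) ^ (-(d : ℝ) / 2) with hsupGdef
  have hsupGpos : 0 < supG := Real.rpow_pos_of_pos (by positivity) _
  have hGnn : ∀ p ∈ K, ∀ z : EuclideanSpace ℝ (Fin d), 0 ≤ heatK β (T - p.1) z := by
    intro p hp z
    have := hTt p hp
    unfold heatK
    positivity
  have hGub : ∀ p ∈ K, ∀ z : EuclideanSpace ℝ (Fin d), heatK β (T - p.1) z ≤ supG := by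
    intro p hp z
    have h1 := hTt p hp
    have h2 := hεle p hp
    have hbase : 4 * π * β * ε ≤ 4 * π * β * (T - p.1) :=
      mul_le_mul_of_nonneg_left h2 (by positivity)
    unfold heatK
    calc (4 * π * β * (T - p.1)) ^ (-(d : ℝ) / 2) * Real.exp (-‖z‖ ^ 2 / (4 * β * (T - p.1)))
        ≤ (4 * π * β * (T - p.1)) ^ (-(d : ℝ) / 2) * 1 := by
          apply mul_le_mul_of_nonneg_left _ (Real.rpow_nonneg (by positivity) _)
          rw [Real.exp_le_one_iff]
          exact div_nonpos_of_nonpos_of_nonneg (neg_nonpos.mpr (by positivity)) (by positivity)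
      _ ≤ supG := by
          rw [mul_one, hsupGdef]
          exact Real.rpow_le_rpow_of_nonpos (by positivity) hbase hdexp
  set m := (4 * π * β * T) ^ (-(d : ℝ) / 2) * Real.exp (-(R ^ 2) / (4 * β * ε)) with hmdef
  have hmpos : 0 < m := mul_pos (Real.rpow_pos_of_pos (by positivity) _) (Real.exp_pos _)
  have hGlb : ∀ p ∈ K, ∀ z ∈ Metric.closedBall xstar ρ,
      m ≤ heatK β (T - p.1) (p.2 - z) := by
    intro p hp z hz
    have h1 := hTt p hp
    have h2 := hεle p hp
    have h3 := htle p hp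
    have hnz : ‖p.2 - z‖ ≤ R := hRz p hp z hz
    have hR0 : 0 ≤ R := le_trans (norm_nonneg _) hnz
    unfold heatK
    apply mul_le_mul
    · exact Real.rpow_le_rpow_of_nonpos (by positivity)
        (mul_le_mul_of_nonneg_left (by linarith) (by positivity)) hdexp
    · rw [Real.exp_le_exp]
      rw [neg_div, neg_div, neg_le_neg_iff]
      apply div_le_div₀ (by positivity) _ (by positivity)
        (mul_le_mul_of_nonneg_left h2 (by positivity))
      exact pow_le_pow_left₀ (norm_nonneg _) hnz 2
    · exact (Real.exp_pos _).le
    · exact (Real.rpow_pos_of_pos (by positivity) _).le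
  -- volume of the small ball
  set vB := (volume (Metric.closedBall xstar ρ)).toReal with hvBdef
  have hvBpos : 0 < vB :=
    ENNReal.toReal_pos (Metric.measure_closedBall_pos volume xstar hρpos).ne'
      measure_closedBall_lt_top.ne
  -- reference integral
  set I₁ := ∫ z, Real.exp (-1 * f z) with hI₁def
  have hI₁pos : 0 < I₁ := hexp_pos 1 one_pos
  -- choose the constants
  refine ⟨supG * I₁ * Real.exp (fstar + δ) / (m * vB),
    div_pos (mul_pos (mul_pos hsupGpos hI₁pos) (Real.exp_pos _)) (mul_pos hmpos hvBpos),
    T * δ / (4 * β), by positivity, T / (4 * β), by positivity, ?_⟩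
  rintro lam ⟨hlam0, hlamle⟩ p hpK
  set α := T / (2 * lam * β) with hα
  have hαpos : 0 < α := by rw [hα]; positivity
  have hα2 : 2 ≤ α := by
    have h4 : lam * (4 * β) ≤ T := (le_div_iff₀ (by positivity)).1 hlamle
    rw [hα, le_div_iff₀ (by positivity)]
    nlinarith
  have h1 := hTt p hpK
  have hEint : Integrable (fun y => Real.exp (-α * f y)) := (hint α hαpos).1
  have hGcont : Continuous fun y : EuclideanSpace ℝ (Fin d) =>
      heatK β (T - p.1) (p.2 - y) := by
    unfold heatK
    exact continuous_const.mul
      ((((continuous_const.sub continuous_id).norm.pow 2).neg.div_const _).rexp)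
  have hGEint : Integrable (fun y => heatK β (T - p.1) (p.2 - y) * Real.exp (-α * f y)) := by
    have := hEint.bdd_mul hGcont.aestronglyMeasurable
      (ae_of_all _ fun y => by
        rw [Real.norm_eq_abs, abs_of_nonneg (hGnn p hpK _)]
        exact hGub p hpK _)
    exact this
  set M := ∫ z, Real.exp (-α * f z) with hM
  have hMpos : 0 < M := hexp_pos α hαpos
  set D := ∫ y, heatK β (T - p.1) (p.2 - y) * Real.exp (-α * f y) with hD
  -- lower bound for the denominator
  have hden : m * Real.exp (-α * (fstar + δ / 2)) * vB ≤ D := by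
    have hptw : ∀ z ∈ Metric.closedBall xstar ρ,
        m * Real.exp (-α * (fstar + δ / 2)) ≤
          heatK β (T - p.1) (p.2 - z) * Real.exp (-α * f z) := by
      intro z hz
      apply mul_le_mul (hGlb p hpK z hz) _ (Real.exp_pos _).le (hGnn p hpK _)
      rw [Real.exp_le_exp]
      have := hρf z hz
      nlinarith
    have h1' := setIntegral_ge_of_const_le (measurableSet_closedBall)
      measure_closedBall_lt_top.ne hptw hGEint.integrableOn
    have h2' : (∫ z in Metric.closedBall xstar ρ,
        heatK β (T - p.1) (p.2 - z) * Real.exp (-α * f z)) ≤ D :=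
      setIntegral_le_integral hGEint (ae_of_all _ fun y =>
        mul_nonneg (hGnn p hpK _) (Real.exp_pos _).le)
    calc m * Real.exp (-α * (fstar + δ / 2)) * vB
        = m * Real.exp (-α * (fstar + δ / 2)) * (volume (Metric.closedBall xstar ρ)).toReal := by
          rw [hvBdef]
      _ ≤ ∫ z in Metric.closedBall xstar ρ,
            heatK β (T - p.1) (p.2 - z) * Real.exp (-α * f z) := by
            rw [smul_eq_mul, mul_comm] at h1'; exact h1'
      _ ≤ D := h2'
  have hDpos : 0 < D :=
    lt_of_lt_of_le (mul_pos (mul_pos hmpos (Real.exp_pos _)) hvBpos) hden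
  -- rewrite hHC
  have hHCeq : hHC T β lam f p.1 p.2 = D / M := by
    unfold hHC gibbsDen
    rw [← hα, ← hM]
    simp only [← mul_div_assoc]
    rw [integral_div, ← hD]
  -- rewrite etaHC pointwise
  have hetaeq : ∀ y, etaHC T β lam f p.1 p.2 y =
      heatK β (T - p.1) (p.2 - y) * Real.exp (-α * f y) / D := by
    intro y
    unfold etaHC gibbsDen
    rw [← hα, ← hM, hHCeq]
    field_simp
  -- upper bound for the numerator
  have hnum : (∫ y in {y : EuclideanSpace ℝ (Fin d) | r ≤ ‖y - xstar‖},
      heatK β (T - p.1) (p.2 - y) * Real.exp (-α * f y)) ≤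
      supG * Real.exp (-(α - 1) * (fstar + δ)) * I₁ := by
    have hptw : ∀ y ∈ {y : EuclideanSpace ℝ (Fin d) | r ≤ ‖y - xstar‖},
        heatK β (T - p.1) (p.2 - y) * Real.exp (-α * f y) ≤
          supG * Real.exp (-(α - 1) * (fstar + δ)) * Real.exp (-1 * f y) := by
      intro y hy
      have hfy : fstar + δ ≤ f y := hδS y hy
      have hsplit : Real.exp (-α * f y) =
          Real.exp (-(α - 1) * f y) * Real.exp (-1 * f y) := by
        rw [← Real.exp_add]; congr 1; ring
      rw [hsplit, mul_assoc]
      apply mul_le_mul (hGub p hpK _) _ (by positivity) hsupGpos.le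
      apply mul_le_mul_of_nonneg_right _ (Real.exp_pos _).le
      rw [Real.exp_le_exp]
      nlinarith
    have hRHSint : Integrable (fun y =>
        supG * Real.exp (-(α - 1) * (fstar + δ)) * Real.exp (-1 * f y)) :=
      (hint 1 one_pos).1.const_mul _
    calc (∫ y in {y : EuclideanSpace ℝ (Fin d) | r ≤ ‖y - xstar‖},
          heatK β (T - p.1) (p.2 - y) * Real.exp (-α * f y))
        ≤ ∫ y in {y : EuclideanSpace ℝ (Fin d) | r ≤ ‖y - xstar‖},
            supG * Real.exp (-(α - 1) * (fstar + δ)) * Real.exp (-1 * f y) :=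
          setIntegral_mono_on hGEint.integrableOn hRHSint.integrableOn hSmeas hptw
      _ ≤ ∫ y, supG * Real.exp (-(α - 1) * (fstar + δ)) * Real.exp (-1 * f y) :=
          setIntegral_le_integral hRHSint (ae_of_all _ fun y => by positivity)
      _ = supG * Real.exp (-(α - 1) * (fstar + δ)) * I₁ := by
          rw [integral_const_mul, hI₁def]
  -- put everything together
  calc (∫ y in {y : EuclideanSpace ℝ (Fin d) | r ≤ ‖y - xstar‖},
        etaHC T β lam f p.1 p.2 y)
      = (∫ y in {y : EuclideanSpace ℝ (Fin d) | r ≤ ‖y - xstar‖},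
          heatK β (T - p.1) (p.2 - y) * Real.exp (-α * f y)) / D := by
        simp only [hetaeq]
        rw [integral_div]
    _ ≤ (supG * Real.exp (-(α - 1) * (fstar + δ)) * I₁) /
          (m * Real.exp (-α * (fstar + δ / 2)) * vB) :=
        div_le_div₀ (by positivity) hnum
          (mul_pos (mul_pos hmpos (Real.exp_pos _)) hvBpos) hden
    _ = supG * I₁ * Real.exp (fstar + δ) / (m * vB) *
          Real.exp (-(T * δ / (4 * β)) / lam) := by
        have hexpid : Real.exp (-(α - 1) * (fstar + δ)) =
            Real.exp (fstar + δ) * (Real.exp (-α * (fstar + δ / 2)) *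
              Real.exp (-(T * δ / (4 * β)) / lam)) := by
          rw [← Real.exp_add, ← Real.exp_add]
          congr 1
          rw [hα]
          field_simp
          ring
        rw [hexpid]
        field_simp
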